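/- The Grassmann-Plücker relations hold: for any k×n matrix C over a field, for any indices j₁,...,j_{k-1} and i₁,...,i_{k+1} in {1,...,n}, one has Σ_{l=1}^{k+1} (-1)^{l+1} p_{j₁···j_{k-1}i_l}(C) · p_{i₁···î_l···i_{k+1}}(C) = 0, where p denotes a maximal k×k minor of C indexed by the given columns and the hat denotes omission. -/
import Mathlib


open Matrix

/-- The Grassmann–Plücker relations for maximal minors of a (k+1)×n matrix. -/
theorem stmt_10 {F : Type*} [Field F] (k n : ℕ)
    (C : Matrix (Fin (k + 1)) (Fin n) F)
    (j : Fin k → Fin n) (i : Fin (k + 2) → Fin n) :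
    ∑ l : Fin (k + 2), (-1 : F) ^ (l : ℕ) *
        (C.submatrix id (Fin.snoc j (i l))).det *
        (C.submatrix id (i ∘ l.succAbove)).det = 0 := by
  -- The auxiliary (k+2)×(k+2) matrix: row 0 is the vector of "snoc" minors,
  -- the remaining rows are the columns `i l` of `C`.
  set B : Matrix (Fin (k + 2)) (Fin (k + 2)) F :=
    Matrix.of fun r l =>
      Fin.cases ((C.submatrix id (Fin.snoc j (i l))).det) (fun r' => C r' (i l)) r with hB
  -- coefficients expressing row 0 of B as a combination of the other rows
  set c : Fin (k + 2) → F :=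
    Fin.cases 0 (fun m => (-1 : F) ^ ((m : ℕ) + (k : ℕ)) *
      (C.submatrix m.succAbove j).det) with hc
  have hrow : B 0 = ∑ r : Fin (k + 2), c r • B r := by
    funext l
    have hexp := Matrix.det_succ_column (C.submatrix id (Fin.snoc j (i l))) (Fin.last k)
    have h0 : B 0 l = (C.submatrix id (Fin.snoc j (i l))).det := rfl
    rw [h0, hexp]
    rw [Finset.sum_apply, Fin.sum_univ_succ (f := fun r => (c r • B r) l)]
    simp only [hc, Fin.cases_zero, zero_smul, Pi.zero_apply, zero_add]
    refine Finset.sum_congr rfl fun m _ => ?_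
    have h1 : ((C.submatrix id (Fin.snoc j (i l))).submatrix m.succAbove
        (Fin.last k).succAbove) = C.submatrix m.succAbove j := by
      ext a b
      simp [Fin.succAbove_last, Fin.snoc_castSucc]
    have h2 : (C.submatrix id (Fin.snoc j (i l))) m (Fin.last k) = C m (i l) := by
      simp [Fin.snoc_last]
    rw [h1, h2]
    have h3 : (c m.succ • B m.succ) l =
        ((-1 : F) ^ ((m : ℕ) + (k : ℕ)) * (C.submatrix m.succAbove j).det) * C m (i l) := by
      simp [hc, hB, Pi.smul_apply, smul_eq_mul]
    rw [h3]
    have : ((m : ℕ) + ((Fin.last k : Fin (k+1)) : ℕ)) = (m : ℕ) + k := by simp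
    rw [this]
    ring
  have hdet : B.det = 0 := by
    have := Matrix.det_updateRow_sum B 0 c
    rw [← hrow, Matrix.updateRow_eq_self] at this
    simpa [hc] using this
  have key : (∑ l : Fin (k + 2), (-1 : F) ^ (l : ℕ) *
        (C.submatrix id (Fin.snoc j (i l))).det *
        (C.submatrix id (i ∘ l.succAbove)).det) = B.det := by
    rw [Matrix.det_succ_row_zero]
    refine Finset.sum_congr rfl fun l _ => ?_
    have hB0 : B 0 l = (C.submatrix id (Fin.snoc j (i l))).det := rfl
    have hsub : B.submatrix Fin.succ l.succAbove = C.submatrix id (i ∘ l.succAbove) := by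
      ext a b
      simp [hB]
    rw [hB0, hsub]
  rw [key, hdet]
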